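/- Let n = 2p+2 with p ≥ 1 and let A = diag(λ₁, −λ₁, …, λ_{p+1}, −λ_{p+1}) be the n×n real diagonal matrix with λ₁ > … > λ_{p+1} > 0 and 2(λ₁² + … + λ_{p+1}²) = 1, viewed as a complex Hermitian matrix. Then the real subspace {X an n×n complex Hermitian matrix : tr X = 0, tr(XA) = 0, and tr(X A^{2α}) = 0 for all 1 ≤ α ≤ p} is exactly the ℝ-linear span of the set {Ê_{ij} : 1 ≤ i < j ≤ n} ∪ {i·(E_{ij} − E_{ji})/√2 : 1 ≤ i < j ≤ n} ∪ {X_α(A) : 1 ≤ α ≤ p}. -/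

import Mathlib

open Matrix Finset

lemma sum_range_pair {M : Type*} [AddCommMonoid M] (m : ℕ) (g : ℕ → M) :
    ∑ i ∈ Finset.range (2 * m), g i = ∑ j ∈ Finset.range m, (g (2 * j) + g (2 * j + 1)) := by
  induction m with
  | zero => simp
  | succ k ih =>
    rw [Finset.sum_range_succ, ← ih, Nat.mul_succ]
    rw [show 2 * k + 2 = (2 * k + 1) + 1 from rfl, Finset.sum_range_succ, Finset.sum_range_succ,
      add_assoc]

lemma finSumPair {M : Type*} [AddCommMonoid M] (p : ℕ) (g : Fin (2 * p + 2) → M) :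
    ∑ i, g i = ∑ j : Fin (p + 1),
      (g ⟨2 * j.val, by omega⟩ + g ⟨2 * j.val + 1, by omega⟩) := by
  set F : ℕ → M := fun k => if h : k < 2 * p + 2 then g ⟨k, h⟩ else 0 with hF
  have h : ∑ i, g i = ∑ i ∈ Finset.range (2 * p + 2), F i := by
    rw [← Fin.sum_univ_eq_sum_range]
    exact Finset.sum_congr rfl fun i _ => by simp [hF]
  rw [h]
  conv_lhs => rw [show 2 * p + 2 = 2 * (p + 1) from by ring]
  rw [sum_range_pair, ← Fin.sum_univ_eq_sum_range]
  refine Finset.sum_congr rfl fun j _ => ?_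
  have h1 : 2 * (j : ℕ) < 2 * p + 2 := by omega
  have h2 : 2 * (j : ℕ) + 1 < 2 * p + 2 := by omega
  simp [hF, h1, h2]

lemma trace_mul_diag {n : ℕ} (X : Matrix (Fin n) (Fin n) ℂ) (w : Fin n → ℂ) :
    Matrix.trace (X * Matrix.diagonal w) = ∑ i, X i i * w i := by
  simp [Matrix.trace, Matrix.diag, Matrix.mul_diagonal]

lemma stdBasis_conjT {n : ℕ} (i j : Fin n) :
    (Matrix.single i j (1 : ℂ))ᴴ = Matrix.single j i 1 := by
  ext a b
  simp only [Matrix.conjTranspose_apply, Matrix.single, Matrix.of_apply]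
  by_cases h : j = a ∧ i = b
  · simp [h.1, h.2]
  · rw [if_neg h, if_neg (by tauto)]
    simp

lemma trace_std_zero {n : ℕ} {i j : Fin n} (hij : i ≠ j) (c : ℂ) :
    Matrix.trace (Matrix.single i j c) = 0 := by
  rw [Matrix.trace]
  apply Finset.sum_eq_zero
  intro x _
  simp only [Matrix.diag_apply]
  exact Matrix.single_apply_of_ne _ _ _ _ _ (by rintro ⟨rfl, rfl⟩; exact hij rfl)

lemma trace_std_mul_diag {n : ℕ} {i j : Fin n} (hij : i ≠ j) (c : ℂ) (w : Fin n → ℂ) :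
    Matrix.trace (Matrix.single i j c * Matrix.diagonal w) = 0 := by
  rw [trace_mul_diag]
  apply Finset.sum_eq_zero
  intro x _
  rw [Matrix.single_apply_of_ne _ _ _ _ _ (by rintro ⟨rfl, rfl⟩; exact hij rfl),
    zero_mul]

lemma offdiag_mem_span {n : ℕ} (S : Set (Matrix (Fin n) (Fin n) ℂ))
    (h1 : ∀ i j : Fin n, i < j →
      (Real.sqrt 2 : ℂ)⁻¹ • (Matrix.single i j 1 + Matrix.single j i 1) ∈ S)
    (h2 : ∀ i j : Fin n, i < j →
      (Real.sqrt 2 : ℂ)⁻¹ • (Complex.I •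
        (Matrix.single i j 1 - Matrix.single j i 1)) ∈ S)
    {M : Matrix (Fin n) (Fin n) ℂ} (hM : Mᴴ = M) (hd : ∀ i, M i i = 0) :
    M ∈ Submodule.span ℝ S := by
  have hs2 : ((Real.sqrt 2 : ℝ) : ℂ) ≠ 0 := Complex.ofReal_ne_zero.mpr (by positivity)
  have hrepr : M = ∑ q ∈ Finset.univ.filter (fun q : Fin n × Fin n => q.1 < q.2),
      (((M q.1 q.2).re * Real.sqrt 2) •
        ((Real.sqrt 2 : ℂ)⁻¹ • (Matrix.single q.1 q.2 1 + Matrix.single q.2 q.1 1)) +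
       ((M q.1 q.2).im * Real.sqrt 2) •
        ((Real.sqrt 2 : ℂ)⁻¹ • (Complex.I •
          (Matrix.single q.1 q.2 1 - Matrix.single q.2 q.1 1)))) := by
    ext i k
    rw [Matrix.sum_apply]
    rcases lt_trichotomy i k with h | h | h
    · rw [Finset.sum_eq_single_of_mem (i, k) (by simp [h])]
      · have hik : i ≠ k := ne_of_lt h
        simp only [Matrix.add_apply, Matrix.smul_apply, Matrix.sub_apply,
          Matrix.single_apply_same, smul_eq_mul, Complex.real_smul]
        simp only [Matrix.single_apply_of_ne _ _ _ _ _
          (show ¬(k = i ∧ i = k) by tauto)]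
        push_cast
        field_simp
        linear_combination (-1 : ℂ) * Complex.re_add_im (M i k)
      · intro q hq hne
        simp only [Finset.mem_filter] at hq
        have e1 : ¬(q.1 = i ∧ q.2 = k) := by
          intro ⟨a, b⟩; exact hne (by ext <;> simp [a, b])
        have e2 : ¬(q.2 = i ∧ q.1 = k) := by
          rintro ⟨a, b⟩; subst a b; exact absurd hq.2 (not_lt.mpr h.le)
        simp [Matrix.smul_apply, e1, e2]
    · subst h
      rw [hd i, Finset.sum_eq_zero]
      intro q hq
      simp only [Finset.mem_filter] at hq
      have e1 : ¬(q.1 = i ∧ q.2 = i) := by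
        rintro ⟨a, b⟩; exact absurd hq.2 (by simp [a, b])
      have e2 : ¬(q.2 = i ∧ q.1 = i) := by
        rintro ⟨a, b⟩; exact absurd hq.2 (by simp [a, b])
      simp [Matrix.smul_apply, e1, e2]
    · rw [Finset.sum_eq_single_of_mem (k, i) (by simp [h])]
      · have hik : k ≠ i := ne_of_lt h
        have hMik : M i k = (M k i).re - (M k i).im * Complex.I := by
          have h0 := congrFun (congrFun hM i) k
          rw [Matrix.conjTranspose_apply] at h0
          rw [← h0]
          apply Complex.ext <;> simp
        simp only [Matrix.add_apply, Matrix.smul_apply, Matrix.sub_apply,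
          Matrix.single_apply_same, smul_eq_mul, Complex.real_smul]
        simp only [Matrix.single_apply_of_ne _ _ _ _ _
          (show ¬(k = i ∧ i = k) by tauto)]
        rw [hMik]
        push_cast
        field_simp
        ring
      · intro q hq hne
        simp only [Finset.mem_filter] at hq
        have e1 : ¬(q.1 = i ∧ q.2 = k) := by
          rintro ⟨a, b⟩; subst a b; exact absurd hq.2 (not_lt.mpr h.le)
        have e2 : ¬(q.2 = i ∧ q.1 = k) := by
          intro ⟨a, b⟩; exact hne (by ext <;> simp [a, b])
        simp [Matrix.smul_apply, e1, e2]
  rw [hrepr]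
  refine Submodule.sum_mem _ fun q hq => ?_
  have hq' := (Finset.mem_filter.mp hq).2
  exact add_mem
    (Submodule.smul_mem _ _ (Submodule.subset_span (h1 _ _ hq')))
    (Submodule.smul_mem _ _ (Submodule.subset_span (h2 _ _ hq')))

/-- The discrete values on the diagonal. -/
def aR (p : ℕ) (lam : Fin (p + 1) → ℝ) : Fin (2 * p + 2) → ℝ :=
  fun i => (-1 : ℝ) ^ ((i : ℕ) % 2) * lam ⟨(i : ℕ) / 2, Nat.div_lt_of_lt_mul (by omega)⟩

lemma aR_lo (p : ℕ) (lam : Fin (p + 1) → ℝ) (j : Fin (p + 1)) :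
    aR p lam ⟨2 * j.val, by omega⟩ = lam j := by
  simp only [aR]
  rw [show (2 * j.val) % 2 = 0 by omega, pow_zero, one_mul]
  congr 1
  exact Fin.ext (by show 2 * (j : ℕ) / 2 = (j : ℕ); omega)

lemma aR_hi (p : ℕ) (lam : Fin (p + 1) → ℝ) (j : Fin (p + 1)) :
    aR p lam ⟨2 * j.val + 1, by omega⟩ = -lam j := by
  simp only [aR]
  rw [show (2 * j.val + 1) % 2 = 1 by omega, pow_one]
  rw [show (-1 : ℝ) * lam ⟨(2 * j.val + 1) / 2, by omega⟩ = -lam ⟨(2 * j.val + 1) / 2, by omega⟩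
    from by ring]
  congr 2
  exact Fin.ext (by show (2 * (j : ℕ) + 1) / 2 = (j : ℕ); omega)

lemma sum_aR_odd (p : ℕ) (lam : Fin (p + 1) → ℝ) (k : ℕ) (hk : Odd k) :
    ∑ i, aR p lam i ^ k = 0 := by
  rw [finSumPair]
  apply Finset.sum_eq_zero
  intro j _
  rw [aR_lo, aR_hi, hk.neg_pow]
  ring

lemma sum_aR_even (p : ℕ) (lam : Fin (p + 1) → ℝ) (k : ℕ) (hk : Even k) :
    ∑ i, aR p lam i ^ k = 2 * ∑ j, lam j ^ k := by
  rw [finSumPair, Finset.mul_sum]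
  apply Finset.sum_congr rfl
  intro j _
  rw [aR_lo, aR_hi, hk.neg_pow]
  ring

/-- The tangent-condition submodule. -/
noncomputable def tangSet (n p : ℕ) (A : Matrix (Fin n) (Fin n) ℂ) :
    Submodule ℝ (Matrix (Fin n) (Fin n) ℂ) where
  carrier := {X | Xᴴ = X ∧ Matrix.trace X = 0 ∧ Matrix.trace (X * A) = 0 ∧
    ∀ α, 1 ≤ α → α ≤ p → Matrix.trace (X * A ^ (2 * α)) = 0}
  add_mem' := by
    rintro X Y ⟨h1, h2, h3, h4⟩ ⟨g1, g2, g3, g4⟩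
    refine ⟨by rw [Matrix.conjTranspose_add, h1, g1], by rw [Matrix.trace_add, h2, g2, add_zero],
      by rw [add_mul, Matrix.trace_add, h3, g3, add_zero], fun α hα1 hα2 => ?_⟩
    rw [add_mul, Matrix.trace_add, h4 α hα1 hα2, g4 α hα1 hα2, add_zero]
  zero_mem' := by
    refine ⟨by simp, by simp, by simp, fun α _ _ => by simp⟩
  smul_mem' := by
    rintro r X ⟨h1, h2, h3, h4⟩
    refine ⟨by rw [Matrix.conjTranspose_smul, star_trivial, h1], ?_, ?_, fun α hα1 hα2 => ?_⟩
    · rw [Matrix.trace_smul, h2, smul_zero]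
    · rw [smul_mul_assoc, Matrix.trace_smul, h3, smul_zero]
    · rw [smul_mul_assoc, Matrix.trace_smul, h4 α hα1 hα2, smul_zero]

/-- real tangent space of `B_{n,ℂ}` at a real diagonal point,
even regular case `n = 2p+2`. -/
theorem tangent_space_complex_even_regular_case (p : ℕ) (hp : 1 ≤ p)
    (lam : Fin (p + 1) → ℝ)
    (hanti : StrictAnti lam) (hpos : ∀ i, 0 < lam i)
    (hsum : 2 * ∑ i, lam i ^ 2 = 1)
    (A : Matrix (Fin (2 * p + 2)) (Fin (2 * p + 2)) ℂ)
    (hA : A = Matrix.diagonal (fun i : Fin (2 * p + 2) =>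
      (((-1 : ℝ) ^ ((i : ℕ) % 2) * lam ⟨(i : ℕ) / 2, by omega⟩ : ℝ) : ℂ))) :
    {X : Matrix (Fin (2 * p + 2)) (Fin (2 * p + 2)) ℂ |
        Xᴴ = X ∧ Matrix.trace X = 0 ∧ Matrix.trace (X * A) = 0 ∧
          ∀ α, 1 ≤ α → α ≤ p → Matrix.trace (X * A ^ (2 * α)) = 0} =
      ↑(Submodule.span ℝ
        ({M | ∃ i j : Fin (2 * p + 2), i < j ∧
            M = (Real.sqrt 2 : ℂ)⁻¹ •
              (Matrix.single i j 1 + Matrix.single j i 1)} ∪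
         {M | ∃ i j : Fin (2 * p + 2), i < j ∧
            M = (Real.sqrt 2 : ℂ)⁻¹ • (Complex.I •
              (Matrix.single i j 1 - Matrix.single j i 1))} ∪
         {M | ∃ α, 1 ≤ α ∧ α ≤ p ∧
            M = A ^ (2 * α + 1) - Matrix.trace (A ^ (2 * α + 2)) • A})) := by
  -- Notation
  set S : Set (Matrix (Fin (2 * p + 2)) (Fin (2 * p + 2)) ℂ) :=
    ({M | ∃ i j : Fin (2 * p + 2), i < j ∧
        M = (Real.sqrt 2 : ℂ)⁻¹ •
          (Matrix.single i j 1 + Matrix.single j i 1)} ∪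
     {M | ∃ i j : Fin (2 * p + 2), i < j ∧
        M = (Real.sqrt 2 : ℂ)⁻¹ • (Complex.I •
          (Matrix.single i j 1 - Matrix.single j i 1))} ∪
     {M | ∃ α, 1 ≤ α ∧ α ≤ p ∧
        M = A ^ (2 * α + 1) - Matrix.trace (A ^ (2 * α + 2)) • A}) with hS
  have hA' : A = Matrix.diagonal (fun i => ((aR p lam i : ℝ) : ℂ)) := by
    rw [hA]; rfl
  have hApow : ∀ k : ℕ, A ^ k = Matrix.diagonal (fun i => ((aR p lam i : ℝ) : ℂ) ^ k) := by
    intro k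
    rw [hA', Matrix.diagonal_pow]
    rfl
  set cR : ℕ → ℝ := fun α => 2 * ∑ j, lam j ^ (2 * α + 2) with hcR
  have htr : ∀ α : ℕ, Matrix.trace (A ^ (2 * α + 2)) = ((cR α : ℝ) : ℂ) := by
    intro α
    rw [hApow, Matrix.trace_diagonal]
    have : ∑ i, aR p lam i ^ (2 * α + 2) = cR α := by
      rw [sum_aR_even p lam _ ⟨α + 1, by ring⟩, hcR]
    rw [← this]
    push_cast
    ring
  have hX3 : ∀ α : ℕ, A ^ (2 * α + 1) - Matrix.trace (A ^ (2 * α + 2)) • A =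
      Matrix.diagonal (fun i =>
        ((aR p lam i ^ (2 * α + 1) - cR α * aR p lam i : ℝ) : ℂ)) := by
    intro α
    rw [htr α, hApow (2 * α + 1), hA', ← Matrix.diagonal_smul, Matrix.diagonal_sub]
    congr 1
    funext i
    simp only [Pi.smul_apply, smul_eq_mul]
    push_cast
    ring
  -- span ≤ tangent conditions
  have hle : Submodule.span ℝ S ≤ tangSet (2 * p + 2) p A := by
    rw [Submodule.span_le]
    rintro M (hM | hM)
    · rcases hM with ⟨i, j, hij, rfl⟩ | ⟨i, j, hij, rfl⟩
      · refine ⟨?_, ?_, ?_, fun α hα1 hα2 => ?_⟩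
        · rw [Matrix.conjTranspose_smul, Matrix.conjTranspose_add, stdBasis_conjT,
            stdBasis_conjT]
          simp [Complex.star_def, map_inv₀, Complex.conj_ofReal, add_comm]
        · rw [Matrix.trace_smul, Matrix.trace_add, trace_std_zero hij.ne,
            trace_std_zero hij.ne', add_zero, smul_zero]
        · rw [hA', smul_mul_assoc, add_mul, Matrix.trace_smul, Matrix.trace_add,
            trace_std_mul_diag hij.ne, trace_std_mul_diag hij.ne', add_zero, smul_zero]
        · rw [hApow, smul_mul_assoc, add_mul, Matrix.trace_smul, Matrix.trace_add,
            trace_std_mul_diag hij.ne, trace_std_mul_diag hij.ne', add_zero, smul_zero]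
      · refine ⟨?_, ?_, ?_, fun α hα1 hα2 => ?_⟩
        · rw [Matrix.conjTranspose_smul, Matrix.conjTranspose_smul, Matrix.conjTranspose_sub,
            stdBasis_conjT, stdBasis_conjT]
          simp only [Complex.star_def, map_inv₀, Complex.conj_ofReal, Complex.conj_I]
          congr 1
          rw [neg_smul, ← smul_neg, neg_sub]
        · rw [Matrix.trace_smul, Matrix.trace_smul, Matrix.trace_sub, trace_std_zero hij.ne,
            trace_std_zero hij.ne', sub_zero, smul_zero, smul_zero]
        · rw [hA', smul_mul_assoc, smul_mul_assoc, sub_mul, Matrix.trace_smul,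
            Matrix.trace_smul, Matrix.trace_sub, trace_std_mul_diag hij.ne,
            trace_std_mul_diag hij.ne', sub_zero, smul_zero, smul_zero]
        · rw [hApow, smul_mul_assoc, smul_mul_assoc, sub_mul, Matrix.trace_smul,
            Matrix.trace_smul, Matrix.trace_sub, trace_std_mul_diag hij.ne,
            trace_std_mul_diag hij.ne', sub_zero, smul_zero, smul_zero]
    · rcases hM with ⟨α, hα1, hα2, rfl⟩
      refine ⟨?_, ?_, ?_, fun β hβ1 hβ2 => ?_⟩
      · rw [hX3 α]
        ext a b
        by_cases hab : a = b
        · subst hab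
          simp [Matrix.conjTranspose_apply, Complex.conj_ofReal]
        · simp [Matrix.conjTranspose_apply, Matrix.diagonal_apply_ne _ hab,
            Matrix.diagonal_apply_ne _ (Ne.symm hab)]
      · rw [hX3 α, Matrix.trace_diagonal]
        norm_cast
        have h1 := sum_aR_odd p lam (2 * α + 1) ⟨α, by ring⟩
        have h2 := sum_aR_odd p lam 1 odd_one
        rw [Finset.sum_sub_distrib, ← Finset.mul_sum, h1]
        simp only [pow_one] at h2
        rw [h2]
        ring
      · rw [hX3 α, hA', trace_mul_diag]
        simp only [Matrix.diagonal_apply_eq]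
        norm_cast
        have he : ∀ i, (aR p lam i ^ (2 * α + 1) - cR α * aR p lam i) * aR p lam i =
            aR p lam i ^ (2 * α + 2) - cR α * aR p lam i ^ 2 := by
          intro i; ring
        rw [Finset.sum_congr rfl fun i _ => he i, Finset.sum_sub_distrib, ← Finset.mul_sum,
          sum_aR_even p lam _ ⟨α + 1, by ring⟩, sum_aR_even p lam 2 ⟨1, by ring⟩, hsum]
        rw [hcR]
        ring
      · rw [hX3 α, hApow, trace_mul_diag]
        simp only [Matrix.diagonal_apply_eq]
        norm_cast
        have he : ∀ i, (aR p lam i ^ (2 * α + 1) - cR α * aR p lam i) * aR p lam i ^ (2 * β) =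
            aR p lam i ^ (2 * α + 1 + 2 * β) - cR α * aR p lam i ^ (2 * β + 1) := by
          intro i; ring
        rw [Finset.sum_congr rfl fun i _ => he i, Finset.sum_sub_distrib, ← Finset.mul_sum,
          sum_aR_odd p lam _ ⟨α + β, by ring⟩, sum_aR_odd p lam _ ⟨β, by ring⟩]
        ring
  -- main equality proof
  apply Set.Subset.antisymm
  · -- hard direction
    intro X hX
    simp only [Set.mem_setOf_eq] at hX
    obtain ⟨hH, h0, h1, h2⟩ := hX
    set d : Fin (2 * p + 2) → ℝ := fun i => (X i i).re with hd
    have hXd : ∀ i, X i i = ((d i : ℝ) : ℂ) := by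
      intro i
      have h := congrFun (congrFun hH i) i
      rw [Matrix.conjTranspose_apply] at h
      exact (Complex.conj_eq_iff_re.mp h).symm
    -- off-diagonal part
    set D : Matrix (Fin (2 * p + 2)) (Fin (2 * p + 2)) ℂ :=
      Matrix.diagonal (fun i => ((d i : ℝ) : ℂ)) with hD
    have hYH : (X - D)ᴴ = X - D := by
      have : Dᴴ = D := by
        rw [hD]
        ext a b
        by_cases hab : a = b
        · subst hab
          simp [Matrix.conjTranspose_apply, Complex.conj_ofReal]
        · simp [Matrix.conjTranspose_apply, Matrix.diagonal_apply_ne _ hab,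
            Matrix.diagonal_apply_ne _ (Ne.symm hab)]
      rw [Matrix.conjTranspose_sub, hH, this]
    have hYd : ∀ i, (X - D) i i = 0 := by
      intro i
      simp [Matrix.sub_apply, hD, Matrix.diagonal_apply_eq, hXd i]
    have memY : X - D ∈ Submodule.span ℝ S := by
      apply offdiag_mem_span S ?_ ?_ hYH hYd
      · intro i j hij
        exact Set.mem_union_left _ (Set.mem_union_left _ ⟨i, j, hij, rfl⟩)
      · intro i j hij
        exact Set.mem_union_left _ (Set.mem_union_right _ ⟨i, j, hij, rfl⟩)
    -- real trace conditions
    have hr0 : ∑ i, d i = 0 := by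
      have h := h0
      rw [Matrix.trace] at h
      simp only [Matrix.diag_apply, hXd] at h
      exact_mod_cast h
    have hr1 : ∑ i, d i * aR p lam i = 0 := by
      have h := h1
      rw [hA', trace_mul_diag] at h
      simp only [hXd] at h
      exact_mod_cast h
    have hr2 : ∀ α, 1 ≤ α → α ≤ p → ∑ i, d i * aR p lam i ^ (2 * α) = 0 := by
      intro α hα1 hα2
      have h := h2 α hα1 hα2
      rw [hApow, trace_mul_diag] at h
      simp only [hXd] at h
      exact_mod_cast h
    -- pair sums vanish
    set s : Fin (p + 1) → ℝ :=
      fun j => d ⟨2 * j.val, by omega⟩ + d ⟨2 * j.val + 1, by omega⟩ with hsdef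
    have hμanti : StrictAnti (fun j : Fin (p + 1) => lam j ^ 2) := by
      intro a b hab
      have h := hanti hab
      dsimp only
      nlinarith [hpos a, hpos b]
    have hμinj : Function.Injective (fun j : Fin (p + 1) => lam j ^ 2) := hμanti.injective
    have hs0 : s = 0 := by
      apply eq_zero_of_forall_pow_sum_mul_pow_eq_zero hμinj
      intro i
      by_cases hi : (i : ℕ) = 0
      · simp only [hi, pow_zero, mul_one]
        have h := hr0
        rw [finSumPair p d] at h
        exact h
      · have hk1 : 1 ≤ (i : ℕ) := by omega
        have hk2 : (i : ℕ) ≤ p := by omega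
        have h := hr2 (i : ℕ) hk1 hk2
        rw [finSumPair p (fun i' => d i' * aR p lam i' ^ (2 * (i : ℕ)))] at h
        rw [← h]
        apply Finset.sum_congr rfl
        intro j _
        rw [aR_lo, aR_hi, Even.neg_pow (even_two_mul _), hsdef]
        simp only [← pow_mul]
        ring
    have hdhi : ∀ j : Fin (p + 1), d ⟨2 * j.val + 1, by omega⟩ = -d ⟨2 * j.val, by omega⟩ := by
      intro j
      have h := congrFun hs0 j
      simp only [hsdef, Pi.zero_apply] at h
      linarith
    -- the Vandermonde inverse step
    set f : Fin (p + 1) → ℝ := fun j => d ⟨2 * j.val, by omega⟩ / lam j with hf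
    have hdlo : ∀ j : Fin (p + 1), d ⟨2 * j.val, by omega⟩ = lam j * f j := by
      intro j
      rw [hf]
      dsimp only
      rw [eq_comm, mul_comm]
      exact div_mul_cancel₀ _ (hpos j).ne'
    set V := Matrix.vandermonde (fun j : Fin (p + 1) => lam j ^ 2) with hV
    have hdet : V.det ≠ 0 := Matrix.det_vandermonde_ne_zero_iff.mpr hμinj
    set β : Fin (p + 1) → ℝ := V⁻¹.mulVec f with hβ
    have hVβ : V.mulVec β = f := by
      rw [hβ, Matrix.mulVec_mulVec, Matrix.mul_nonsing_inv _ (isUnit_iff_ne_zero.mpr hdet),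
        Matrix.one_mulVec]
    have hfj : ∀ j, ∑ α : Fin (p + 1), (lam j ^ 2) ^ (α : ℕ) * β α = f j := by
      intro j
      have h := congrFun hVβ j
      simpa [Matrix.mulVec, dotProduct, hV, Matrix.vandermonde_apply] using h
    -- the coefficient relation
    have hμf : ∑ j, lam j ^ 2 * f j = 0 := by
      have h := hr1
      rw [finSumPair p (fun i' => d i' * aR p lam i')] at h
      have he : ∀ j : Fin (p + 1),
          d ⟨2 * j.val, by omega⟩ * aR p lam ⟨2 * j.val, by omega⟩ +
          d ⟨2 * j.val + 1, by omega⟩ * aR p lam ⟨2 * j.val + 1, by omega⟩ =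
          2 * (lam j ^ 2 * f j) := by
        intro j
        rw [aR_lo, aR_hi, hdhi j, hdlo j]
        ring
      rw [Finset.sum_congr rfl fun j _ => he j, ← Finset.mul_sum] at h
      linarith
    have hβsum : ∑ α : Fin (p + 1), β α * cR (α : ℕ) = 0 := by
      have hswap : ∑ j, lam j ^ 2 * f j = ∑ α : Fin (p + 1), β α * (cR (α : ℕ) / 2) := by
        have step1 : ∀ j : Fin (p + 1), lam j ^ 2 * f j =
            ∑ α : Fin (p + 1), β α * lam j ^ (2 * (α : ℕ) + 2) := by
          intro j
          rw [← hfj j, Finset.mul_sum]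
          apply Finset.sum_congr rfl
          intro α _
          rw [show 2 * (α : ℕ) + 2 = 2 * ((α : ℕ) + 1) from by ring, pow_mul, pow_succ']
          ring
        rw [Finset.sum_congr rfl fun j _ => step1 j, Finset.sum_comm]
        apply Finset.sum_congr rfl
        intro α _
        rw [← Finset.mul_sum]
        have : ∑ j, lam j ^ (2 * (α : ℕ) + 2) = cR (α : ℕ) / 2 := by
          rw [hcR]; ring
        rw [this]
      have h := hμf
      rw [hswap] at h
      have : ∑ α : Fin (p + 1), β α * (cR (α : ℕ) / 2) =
          (∑ α : Fin (p + 1), β α * cR (α : ℕ)) / 2 := by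
        rw [Finset.sum_div]
        apply Finset.sum_congr rfl
        intro α _
        ring
      rw [this] at h
      linarith
    have hcR0 : cR 0 = 1 := by
      rw [hcR]
      simpa using hsum
    have hβ0 : β 0 = -∑ γ : Fin p, β γ.succ * cR (γ.val + 1) := by
      have h := hβsum
      rw [Fin.sum_univ_succ] at h
      simp only [Fin.val_zero, hcR0, mul_one, Fin.val_succ] at h
      linarith
    -- the key real identity
    have hreal : ∀ i, d i = ∑ γ : Fin p,
        β γ.succ * (aR p lam i ^ (2 * (γ.val + 1) + 1) - cR (γ.val + 1) * aR p lam i) := by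
      intro i
      have hjlt : (i : ℕ) / 2 < p + 1 := by omega
      set j : Fin (p + 1) := ⟨(i : ℕ) / 2, hjlt⟩ with hj
      have core : ∑ γ : Fin p,
          β γ.succ * (lam j ^ (2 * (γ.val + 1) + 1) - cR (γ.val + 1) * lam j) =
          d ⟨2 * j.val, by omega⟩ := by
        have h1 := hfj j
        rw [Fin.sum_univ_succ] at h1
        simp only [Fin.val_zero, pow_zero, one_mul] at h1
        have e : ∀ γ : Fin p,
            β γ.succ * (lam j ^ (2 * (γ.val + 1) + 1) - cR (γ.val + 1) * lam j) =
            lam j * ((lam j ^ 2) ^ ((γ.succ : Fin (p + 1)) : ℕ) * β γ.succ) -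
              (β γ.succ * cR (γ.val + 1)) * lam j := by
          intro γ
          have hp2 : lam j ^ (2 * (γ.val + 1) + 1) =
              lam j * (lam j ^ 2) ^ ((γ.succ : Fin (p + 1)) : ℕ) := by
            rw [Fin.val_succ, pow_succ, ← pow_mul]
            ring
          rw [hp2]
          ring
        rw [Finset.sum_congr rfl fun γ _ => e γ, Finset.sum_sub_distrib, ← Finset.mul_sum,
          ← Finset.sum_mul]
        have h2 : ∑ γ : Fin p, β γ.succ * cR (γ.val + 1) = -β 0 := by
          rw [hβ0]; ring
        rw [h2, hdlo j]
        linear_combination lam j * h1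
      rcases Nat.even_or_odd (i : ℕ) with ⟨m, hm⟩ | ⟨m, hm⟩
      · have hij : i = ⟨2 * j.val, by omega⟩ := by
          apply Fin.ext
          simp only [hj]
          omega
        rw [hij, aR_lo]
        exact core.symm
      · have hij : i = ⟨2 * j.val + 1, by omega⟩ := by
          apply Fin.ext
          simp only [hj]
          omega
        rw [hij, aR_hi, hdhi j]
        have e : ∀ γ : Fin p,
            β γ.succ * ((-lam j) ^ (2 * (γ.val + 1) + 1) - cR (γ.val + 1) * (-lam j)) =
            -(β γ.succ * (lam j ^ (2 * (γ.val + 1) + 1) - cR (γ.val + 1) * lam j)) := by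
          intro γ
          rw [Odd.neg_pow ⟨γ.val + 1, by ring⟩]
          ring
        rw [Finset.sum_congr rfl fun γ _ => e γ, Finset.sum_neg_distrib, core]
    -- decomposition of the diagonal part
    have hDmem : D = ∑ γ : Fin p, β γ.succ •
        (A ^ (2 * (γ.val + 1) + 1) - Matrix.trace (A ^ (2 * (γ.val + 1) + 2)) • A) := by
      ext i k
      rw [Matrix.sum_apply]
      by_cases hik : i = k
      · subst hik
        simp only [hD, hX3, Matrix.smul_apply, Matrix.diagonal_apply_eq]
        simp only [Complex.real_smul, ← Complex.ofReal_mul, ← Complex.ofReal_sum]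
        rw [Complex.ofReal_inj]
        exact hreal i
      · simp [hD, hX3, Matrix.diagonal_apply_ne _ hik]
    have memD : D ∈ Submodule.span ℝ S := by
      rw [hDmem]
      refine Submodule.sum_mem _ fun γ _ => Submodule.smul_mem _ _ (Submodule.subset_span ?_)
      exact Set.mem_union_right _ ⟨γ.val + 1, by omega, by omega, rfl⟩
    have hXe : X = (X - D) + D := (sub_add_cancel X D).symm
    show X ∈ (Submodule.span ℝ S : Set _)
    rw [SetLike.mem_coe, hXe]
    exact Submodule.add_mem _ memY memD
  · intro X hX
    exact hle hX
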